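/- (Hex Theorem) In any complete 2-colouring of the n×n hexagonal Hex board (every tile coloured Red or Blue), at least one player has a winning chain: either a Red-connected chain joining the two Red sides, or a Blue-connected chain joining the two Blue sides. -/

import Mathlib

/-- Hexagonal adjacency on the grid model of the Hex board: the six neighbours of a
tile are obtained by the displacements `(±1,0)`, `(0,±1)`, `(1,-1)` and `(-1,1)`. -/
def hexAdj (p q : ℤ × ℤ) : Prop :=
  (p.1 - q.1, p.2 - q.2) ∈
    ({(1, 0), (-1, 0), (0, 1), (0, -1), (1, -1), (-1, 1)} : Set (ℤ × ℤ))

/-- A winning chain for the player `red` (Red if `red = true`, Blue otherwise) in a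
complete colouring `c` of the `n × n` Hex board: a nonempty list of tiles of that
player's colour, consecutively hex-adjacent, containing a tile on each of that
player's two opposite sides (Red joins the rows `0` and `n-1`, Blue joins the
columns `0` and `n-1`). -/
def WinningChain (n : ℕ) (c : Fin n × Fin n → Bool) (red : Bool) : Prop :=
  ∃ l : List (Fin n × Fin n), l ≠ [] ∧
    (∀ t ∈ l, c t = red) ∧
    l.Chain' (fun a b => hexAdj ((a.1 : ℤ), (a.2 : ℤ)) ((b.1 : ℤ), (b.2 : ℤ))) ∧
    (if red then
      (∃ a ∈ l, (a.1 : ℕ) = 0) ∧ (∃ b ∈ l, (b.1 : ℕ) = n - 1)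
    else
      (∃ a ∈ l, (a.2 : ℕ) = 0) ∧ (∃ b ∈ l, (b.2 : ℕ) = n - 1))

namespace HexProof

lemma hexAdj_mk {a b e f : ℤ} :
    hexAdj (a, b) (e, f) ↔
      (a - e = 1 ∧ b - f = 0) ∨ (a - e = -1 ∧ b - f = 0) ∨
      (a - e = 0 ∧ b - f = 1) ∨ (a - e = 0 ∧ b - f = -1) ∨
      (a - e = 1 ∧ b - f = -1) ∨ (a - e = -1 ∧ b - f = 1) := by
  simp [hexAdj, Prod.ext_iff]

lemma hexAdj_iff {p q : ℤ × ℤ} :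
    hexAdj p q ↔
      (p.1 - q.1 = 1 ∧ p.2 - q.2 = 0) ∨ (p.1 - q.1 = -1 ∧ p.2 - q.2 = 0) ∨
      (p.1 - q.1 = 0 ∧ p.2 - q.2 = 1) ∨ (p.1 - q.1 = 0 ∧ p.2 - q.2 = -1) ∨
      (p.1 - q.1 = 1 ∧ p.2 - q.2 = -1) ∨ (p.1 - q.1 = -1 ∧ p.2 - q.2 = 1) := by
  obtain ⟨a, b⟩ := p; obtain ⟨e, f⟩ := q; exact hexAdj_mk

lemma hexAdj_symm {p q : ℤ × ℤ} (h : hexAdj p q) : hexAdj q p := by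
  rw [hexAdj_iff] at h ⊢; omega

lemma hexAdj_near {p q : ℤ × ℤ} (h : hexAdj p q) :
    p.1 - q.1 ≤ 1 ∧ q.1 - p.1 ≤ 1 ∧ p.2 - q.2 ≤ 1 ∧ q.2 - p.2 ≤ 1 := by
  rw [hexAdj_iff] at h; omega

/-- majority of three booleans -/
def maj (a b c : Bool) : Bool := (a && b) || (a && c) || (b && c)

/-- the majority-reduced colouring -/
def mred (c : ℤ × ℤ → Bool) : ℤ × ℤ → Bool :=
  fun p => maj (c p) (c (p.1 + 1, p.2)) (c (p.1, p.2 + 1))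

/-- `(t1,t2)` belongs to the triangle of `(p1,p2)` -/
def tri (p1 p2 t1 t2 : ℤ) : Prop :=
  (t1 = p1 ∧ t2 = p2) ∨ (t1 = p1 + 1 ∧ t2 = p2) ∨ (t1 = p1 ∧ t2 = p2 + 1)

/-- at least two of the triangle of `(p1,p2)` have colour `x` -/
def TwoOf (c : ℤ × ℤ → Bool) (x : Bool) (p1 p2 : ℤ) : Prop :=
  (c (p1, p2) = x ∧ c (p1 + 1, p2) = x) ∨ (c (p1, p2) = x ∧ c (p1, p2 + 1) = x) ∨
    (c (p1 + 1, p2) = x ∧ c (p1, p2 + 1) = x)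

lemma maj_twoOf {c : ℤ × ℤ → Bool} {x : Bool} {p1 p2 : ℤ}
    (h : mred c (p1, p2) = x) : TwoOf c x p1 p2 := by
  unfold mred maj at h
  unfold TwoOf
  cases hx : c (p1, p2) <;> cases hy : c (p1 + 1, p2) <;> cases hz : c (p1, p2 + 1) <;>
    cases x <;> simp_all

lemma twoOf_exists {c : ℤ × ℤ → Bool} {x : Bool} {p1 p2 : ℤ} (h : TwoOf c x p1 p2) :
    ∃ t1 t2, tri p1 p2 t1 t2 ∧ c (t1, t2) = x := by
  rcases h with ⟨h, _⟩ | ⟨h, _⟩ | ⟨h, _⟩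
  · exact ⟨p1, p2, Or.inl ⟨rfl, rfl⟩, h⟩
  · exact ⟨p1, p2, Or.inl ⟨rfl, rfl⟩, h⟩
  · exact ⟨p1 + 1, p2, Or.inr (Or.inl ⟨rfl, rfl⟩), h⟩

lemma twoOf_fst {c : ℤ × ℤ → Bool} {x : Bool} {p1 p2 : ℤ} (h : TwoOf c x p1 p2) :
    c (p1, p2) = x ∨ c (p1, p2 + 1) = x := by unfold TwoOf at h; tauto

lemma twoOf_snd {c : ℤ × ℤ → Bool} {x : Bool} {p1 p2 : ℤ} (h : TwoOf c x p1 p2) :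
    c (p1, p2) = x ∨ c (p1 + 1, p2) = x := by unfold TwoOf at h; tauto

lemma twoOf_thd {c : ℤ × ℤ → Bool} {x : Bool} {p1 p2 : ℤ} (h : TwoOf c x p1 p2) :
    c (p1 + 1, p2) = x ∨ c (p1, p2 + 1) = x := by unfold TwoOf at h; tauto

lemma tri_adj {p1 p2 a1 a2 b1 b2 : ℤ} (ha : tri p1 p2 a1 a2) (hb : tri p1 p2 b1 b2) :
    ((a1, a2) : ℤ × ℤ) = (b1, b2) ∨ hexAdj (a1, a2) (b1, b2) := by
  rw [hexAdj_mk, Prod.mk.injEq]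
  unfold tri at ha hb
  omega

/-- the board of the Y game of size `m` -/
def InT (m : ℕ) (p : ℤ × ℤ) : Prop := 0 ≤ p.1 ∧ 0 ≤ p.2 ∧ p.1 + p.2 ≤ (m : ℤ) - 1

lemma tri_inT {m : ℕ} {p1 p2 t1 t2 : ℤ} (hp : InT m (p1, p2)) (ht : tri p1 p2 t1 t2) :
    InT (m + 1) (t1, t2) := by
  unfold InT at hp ⊢
  unfold tri at ht
  push_cast
  simp only at hp ⊢
  omega

def Reach (G : ℤ × ℤ → Prop) : ℤ × ℤ → ℤ × ℤ → Prop :=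
  Relation.ReflTransGen fun p q => hexAdj p q ∧ G q

lemma reach_good {G : ℤ × ℤ → Prop} {p q : ℤ × ℤ} (h : Reach G p q) (hp : G p) : G q := by
  induction h with
  | refl => exact hp
  | tail _ h2 _ => exact h2.2

lemma reach_symm {G : ℤ × ℤ → Prop} {p q : ℤ × ℤ} (h : Reach G p q) (hp : G p) :
    Reach G q p := by
  induction h with
  | refl => exact .refl
  | tail h1 h2 ih =>
      exact Relation.ReflTransGen.trans
        (Relation.ReflTransGen.single ⟨hexAdj_symm h2.1, reach_good h1 hp⟩) ih

def GY (m : ℕ) (c : ℤ × ℤ → Bool) (x : Bool) (q : ℤ × ℤ) : Prop := InT m q ∧ c q = x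

lemma triStep {m : ℕ} {c : ℤ × ℤ → Bool} {x : Bool} {p1 p2 a1 a2 b1 b2 : ℤ}
    (hp : InT m (p1, p2)) (ha : tri p1 p2 a1 a2) (hb : tri p1 p2 b1 b2)
    (hbx : c (b1, b2) = x) : Reach (GY (m + 1) c x) (a1, a2) (b1, b2) := by
  rcases tri_adj ha hb with h | h
  · rw [h]; exact .refl
  · exact Relation.ReflTransGen.single ⟨h, tri_inT hp hb, hbx⟩

lemma triConn {c : ℤ × ℤ → Bool} {x : Bool} {u1 u2 v1 v2 : ℤ}
    (huv : hexAdj (u1, u2) (v1, v2)) (hu : TwoOf c x u1 u2) (hv : TwoOf c x v1 v2) :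
    ∃ a1 a2 b1 b2 : ℤ, tri u1 u2 a1 a2 ∧ tri v1 v2 b1 b2 ∧
      c (a1, a2) = x ∧ c (b1, b2) = x ∧
      (((a1, a2) : ℤ × ℤ) = (b1, b2) ∨ hexAdj (a1, a2) (b1, b2)) := by
  rw [hexAdj_mk] at huv
  unfold TwoOf at hu hv
  rcases huv with ⟨h1, h2⟩ | ⟨h1, h2⟩ | ⟨h1, h2⟩ | ⟨h1, h2⟩ | ⟨h1, h2⟩ | ⟨h1, h2⟩
  · -- u = v + (1,0)
    obtain rfl : u1 = v1 + 1 := by omega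
    obtain rfl : v2 = u2 := by omega
    by_cases hs : c (v1 + 1, v2) = x
    · exact ⟨v1 + 1, v2, v1 + 1, v2, by unfold tri; omega, by unfold tri; omega,
        hs, hs, Or.inl rfl⟩
    · obtain ⟨hMu1, hMu2⟩ : c (v1 + 1 + 1, v2) = x ∧ c (v1 + 1, v2 + 1) = x := by
        rcases hu with ⟨h, _⟩ | ⟨h, _⟩ | h; exacts [absurd h hs, absurd h hs, h]
      obtain ⟨hMv1, hMv2⟩ : c (v1, v2) = x ∧ c (v1, v2 + 1) = x := by
        rcases hv with ⟨_, h⟩ | h | ⟨h, _⟩; exacts [absurd h hs, h, absurd h hs]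
      exact ⟨v1 + 1, v2 + 1, v1, v2 + 1, by unfold tri; omega, by unfold tri; omega,
        hMu2, hMv2, Or.inr (by rw [hexAdj_mk]; omega)⟩
  · -- v = u + (1,0)
    obtain rfl : v1 = u1 + 1 := by omega
    obtain rfl : u2 = v2 := by omega
    by_cases hs : c (u1 + 1, u2) = x
    · exact ⟨u1 + 1, u2, u1 + 1, u2, by unfold tri; omega, by unfold tri; omega,
        hs, hs, Or.inl rfl⟩
    · obtain ⟨hMu1, hMu2⟩ : c (u1, u2) = x ∧ c (u1, u2 + 1) = x := by
        rcases hu with ⟨_, h⟩ | h | ⟨h, _⟩; exacts [absurd h hs, h, absurd h hs]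
      obtain ⟨hMv1, hMv2⟩ : c (u1 + 1 + 1, u2) = x ∧ c (u1 + 1, u2 + 1) = x := by
        rcases hv with ⟨h, _⟩ | ⟨h, _⟩ | h; exacts [absurd h hs, absurd h hs, h]
      exact ⟨u1, u2 + 1, u1 + 1, u2 + 1, by unfold tri; omega, by unfold tri; omega,
        hMu2, hMv2, Or.inr (by rw [hexAdj_mk]; omega)⟩
  · -- u = v + (0,1)
    obtain rfl : u2 = v2 + 1 := by omega
    obtain rfl : v1 = u1 := by omega
    by_cases hs : c (v1, v2 + 1) = x
    · exact ⟨v1, v2 + 1, v1, v2 + 1, by unfold tri; omega, by unfold tri; omega,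
        hs, hs, Or.inl rfl⟩
    · obtain ⟨hMu1, hMu2⟩ : c (v1 + 1, v2 + 1) = x ∧ c (v1, v2 + 1 + 1) = x := by
        rcases hu with ⟨h, _⟩ | ⟨h, _⟩ | h; exacts [absurd h hs, absurd h hs, h]
      obtain ⟨hMv1, hMv2⟩ : c (v1, v2) = x ∧ c (v1 + 1, v2) = x := by
        rcases hv with h | ⟨_, h⟩ | ⟨_, h⟩; exacts [h, absurd h hs, absurd h hs]
      exact ⟨v1 + 1, v2 + 1, v1 + 1, v2, by unfold tri; omega, by unfold tri; omega,
        hMu1, hMv2, Or.inr (by rw [hexAdj_mk]; omega)⟩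
  · -- v = u + (0,1)
    obtain rfl : v2 = u2 + 1 := by omega
    obtain rfl : u1 = v1 := by omega
    by_cases hs : c (u1, u2 + 1) = x
    · exact ⟨u1, u2 + 1, u1, u2 + 1, by unfold tri; omega, by unfold tri; omega,
        hs, hs, Or.inl rfl⟩
    · obtain ⟨hMu1, hMu2⟩ : c (u1, u2) = x ∧ c (u1 + 1, u2) = x := by
        rcases hu with h | ⟨_, h⟩ | ⟨_, h⟩; exacts [h, absurd h hs, absurd h hs]
      obtain ⟨hMv1, hMv2⟩ : c (u1 + 1, u2 + 1) = x ∧ c (u1, u2 + 1 + 1) = x := by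
        rcases hv with ⟨h, _⟩ | ⟨h, _⟩ | h; exacts [absurd h hs, absurd h hs, h]
      exact ⟨u1 + 1, u2, u1 + 1, u2 + 1, by unfold tri; omega, by unfold tri; omega,
        hMu2, hMv1, Or.inr (by rw [hexAdj_mk]; omega)⟩
  · -- u = v + (1,-1) : u = (v1+1, u2), v = (v1, u2+1)
    obtain rfl : u1 = v1 + 1 := by omega
    obtain rfl : v2 = u2 + 1 := by omega
    by_cases hs : c (v1 + 1, u2 + 1) = x
    · exact ⟨v1 + 1, u2 + 1, v1 + 1, u2 + 1, by unfold tri; omega, by unfold tri; omega,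
        hs, hs, Or.inl rfl⟩
    · obtain ⟨hMu1, hMu2⟩ : c (v1 + 1, u2) = x ∧ c (v1 + 1 + 1, u2) = x := by
        rcases hu with h | ⟨_, h⟩ | ⟨_, h⟩; exacts [h, absurd h hs, absurd h hs]
      obtain ⟨hMv1, hMv2⟩ : c (v1, u2 + 1) = x ∧ c (v1, u2 + 1 + 1) = x := by
        rcases hv with ⟨_, h⟩ | h | ⟨h, _⟩; exacts [absurd h hs, h, absurd h hs]
      exact ⟨v1 + 1, u2, v1, u2 + 1, by unfold tri; omega, by unfold tri; omega,
        hMu1, hMv1, Or.inr (by rw [hexAdj_mk]; omega)⟩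
  · -- v = u + (1,-1) : v = (u1+1, v2), u = (u1, v2+1)
    obtain rfl : v1 = u1 + 1 := by omega
    obtain rfl : u2 = v2 + 1 := by omega
    by_cases hs : c (u1 + 1, v2 + 1) = x
    · exact ⟨u1 + 1, v2 + 1, u1 + 1, v2 + 1, by unfold tri; omega, by unfold tri; omega,
        hs, hs, Or.inl rfl⟩
    · obtain ⟨hMu1, hMu2⟩ : c (u1, v2 + 1) = x ∧ c (u1, v2 + 1 + 1) = x := by
        rcases hu with ⟨_, h⟩ | h | ⟨h, _⟩; exacts [absurd h hs, h, absurd h hs]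
      obtain ⟨hMv1, hMv2⟩ : c (u1 + 1, v2) = x ∧ c (u1 + 1 + 1, v2) = x := by
        rcases hv with h | ⟨_, h⟩ | ⟨_, h⟩; exacts [h, absurd h hs, absurd h hs]
      exact ⟨u1, v2 + 1, u1 + 1, v2, by unfold tri; omega, by unfold tri; omega,
        hMu1, hMv1, Or.inr (by rw [hexAdj_mk]; omega)⟩
lemma lift {m : ℕ} {c : ℤ × ℤ → Bool} {x : Bool} {p q : ℤ × ℤ}
    (h : Reach (GY m (mred c) x) p q) (hp : GY m (mred c) x p)
    {a1 a2 : ℤ} (hap : tri p.1 p.2 a1 a2) (hax : c (a1, a2) = x) :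
    ∃ b1 b2, tri q.1 q.2 b1 b2 ∧ c (b1, b2) = x ∧
      Reach (GY (m + 1) c x) (a1, a2) (b1, b2) := by
  induction h with
  | refl => exact ⟨a1, a2, hap, hax, .refl⟩
  | tail h1 h2 ih =>
      rename_i q r
      obtain ⟨b1, b2, hb, hbx, hre⟩ := ih
      have hq : GY m (mred c) x q := reach_good h1 hp
      obtain ⟨hadj, hrT, hrx⟩ := h2
      obtain ⟨q1, q2⟩ := q
      obtain ⟨r1, r2⟩ := r
      have h2u : TwoOf c x q1 q2 := maj_twoOf hq.2
      have h2v : TwoOf c x r1 r2 := maj_twoOf hrx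
      obtain ⟨a1', a2', b1', b2', ha't, hb't, hax', hbx', hor⟩ := triConn hadj h2u h2v
      have s1 : Reach (GY (m + 1) c x) (b1, b2) (a1', a2') :=
        triStep hq.1 hb ha't hax'
      have s2 : Reach (GY (m + 1) c x) (a1', a2') (b1', b2') := by
        rcases hor with h | h
        · rw [h]; exact .refl
        · exact Relation.ReflTransGen.single ⟨h, tri_inT hrT hb't, hbx'⟩
      exact ⟨b1', b2', hb't, hbx', hre.trans (s1.trans s2)⟩

theorem Y_exists (m : ℕ) (hm : 1 ≤ m) : ∀ c : ℤ × ℤ → Bool,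
    ∃ x p, GY m c x p ∧
      (∃ a, Reach (GY m c x) p a ∧ a.1 = 0) ∧
      (∃ b, Reach (GY m c x) p b ∧ b.2 = 0) ∧
      (∃ e, Reach (GY m c x) p e ∧ e.1 + e.2 = (m : ℤ) - 1) := by
  induction m, hm using Nat.le_induction with
  | base =>
      intro c
      refine ⟨c (0, 0), (0, 0), ⟨by simp [InT], rfl⟩,
        ⟨(0, 0), .refl, rfl⟩, ⟨(0, 0), .refl, rfl⟩, ⟨(0, 0), .refl, by norm_num⟩⟩
  | succ m hm ih =>
      intro c
      obtain ⟨x, p, hp, ⟨a, hra, ha0⟩, ⟨b, hrb, hb0⟩, ⟨e, hre, hesum⟩⟩ := ih (mred c)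
      obtain ⟨p1, p2⟩ := p
      have h2p : TwoOf c x p1 p2 := maj_twoOf hp.2
      obtain ⟨s1, s2, hs, hsx⟩ := twoOf_exists h2p
      have hsG : GY (m + 1) c x (s1, s2) := ⟨tri_inT hp.1 hs, hsx⟩
      refine ⟨x, (s1, s2), hsG, ?_, ?_, ?_⟩
      · -- side i = 0
        obtain ⟨A1, A2⟩ := a
        obtain ⟨b1, b2, hbt, hbx, hreach⟩ := lift hra hp hs hsx
        have haG : GY m (mred c) x (A1, A2) := reach_good hra hp
        have h2a : TwoOf c x A1 A2 := maj_twoOf haG.2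
        have hA1 : A1 = 0 := ha0
        rcases twoOf_fst h2a with ht | ht
        · exact ⟨(A1, A2), hreach.trans (triStep haG.1 hbt (by unfold tri; omega) ht), hA1⟩
        · exact ⟨(A1, A2 + 1), hreach.trans (triStep haG.1 hbt (by unfold tri; omega) ht), hA1⟩
      · -- side j = 0
        obtain ⟨B1, B2⟩ := b
        obtain ⟨b1, b2, hbt, hbx, hreach⟩ := lift hrb hp hs hsx
        have hbG : GY m (mred c) x (B1, B2) := reach_good hrb hp
        have h2b : TwoOf c x B1 B2 := maj_twoOf hbG.2
        have hB2 : B2 = 0 := hb0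
        rcases twoOf_snd h2b with ht | ht
        · exact ⟨(B1, B2), hreach.trans (triStep hbG.1 hbt (by unfold tri; omega) ht), hB2⟩
        · exact ⟨(B1 + 1, B2), hreach.trans (triStep hbG.1 hbt (by unfold tri; omega) ht), hB2⟩
      · -- side i + j = m
        obtain ⟨E1, E2⟩ := e
        obtain ⟨b1, b2, hbt, hbx, hreach⟩ := lift hre hp hs hsx
        have heG : GY m (mred c) x (E1, E2) := reach_good hre hp
        have h2e : TwoOf c x E1 E2 := maj_twoOf heG.2
        have hE : E1 + E2 = (m : ℤ) - 1 := hesum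
        rcases twoOf_thd h2e with ht | ht
        · refine ⟨(E1 + 1, E2), hreach.trans (triStep heG.1 hbt (by unfold tri; omega) ht), ?_⟩
          show E1 + 1 + E2 = ((m + 1 : ℕ) : ℤ) - 1
          push_cast; omega
        · refine ⟨(E1, E2 + 1), hreach.trans (triStep heG.1 hbt (by unfold tri; omega) ht), ?_⟩
          show E1 + (E2 + 1) = ((m + 1 : ℕ) : ℤ) - 1
          push_cast; omega
def toFin (n : ℕ) (hn : 0 < n) (p : ℤ × ℤ) : Fin n × Fin n :=
  (⟨p.1.toNat % n, Nat.mod_lt _ hn⟩, ⟨p.2.toNat % n, Nat.mod_lt _ hn⟩)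

def InSq (n : ℕ) (p : ℤ × ℤ) : Prop :=
  0 ≤ p.1 ∧ p.1 < (n : ℤ) ∧ 0 ≤ p.2 ∧ p.2 < (n : ℤ)

/-- the extension of a hex colouring to the Y board of size `2n-1` -/
def extc (n : ℕ) (hn : 0 < n) (c : Fin n × Fin n → Bool) : ℤ × ℤ → Bool :=
  fun p => if (n : ℤ) ≤ p.1 then true else if (n : ℤ) ≤ p.2 then false else c (toFin n hn p)

def GS (n : ℕ) (hn : 0 < n) (c : Fin n × Fin n → Bool) (x : Bool) (q : ℤ × ℤ) : Prop :=
  InSq n q ∧ extc n hn c q = x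

lemma extc_sq {n : ℕ} {hn : 0 < n} {c : Fin n × Fin n → Bool} {p : ℤ × ℤ}
    (h : InSq n p) : extc n hn c p = c (toFin n hn p) := by
  unfold extc
  rw [if_neg (not_le.mpr h.2.1), if_neg (not_le.mpr h.2.2.2)]

lemma toFin_fst {n : ℕ} {hn : 0 < n} {p : ℤ × ℤ} (h0 : 0 ≤ p.1) (h1 : p.1 < (n : ℤ)) :
    (((toFin n hn p).1 : ℕ) : ℤ) = p.1 := by
  simp only [toFin]
  rw [Nat.mod_eq_of_lt (by omega)]
  omega

lemma toFin_snd {n : ℕ} {hn : 0 < n} {p : ℤ × ℤ} (h0 : 0 ≤ p.2) (h1 : p.2 < (n : ℤ)) :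
    (((toFin n hn p).2 : ℕ) : ℤ) = p.2 := by
  simp only [toFin]
  rw [Nat.mod_eq_of_lt (by omega)]
  omega

lemma cut_red {n : ℕ} {hn : 0 < n} {c : Fin n × Fin n → Bool} {a e : ℤ × ℤ}
    (h : Reach (GY (2 * n - 1) (extc n hn c) true) a e) (ha : GS n hn c true a) :
    (InSq n e ∧ Reach (GS n hn c true) a e) ∨
      ∃ t, Reach (GS n hn c true) a t ∧ t.1 = (n : ℤ) - 1 := by
  induction h with
  | refl => exact Or.inl ⟨ha.1, .refl⟩
  | tail h1 h2 ih =>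
      rename_i q r
      obtain ⟨hadj, hrT, hrx⟩ := h2
      rcases ih with ⟨hsq, hre⟩ | hr
      · by_cases hN : (n : ℤ) ≤ r.1
        · right
          refine ⟨q, hre, ?_⟩
          have hnear := hexAdj_near hadj
          have hq1 : q.1 < (n : ℤ) := hsq.2.1
          omega
        · have hr2 : r.2 < (n : ℤ) := by
            by_contra h'
            have hf : extc n hn c r = false := by
              unfold extc
              rw [if_neg hN, if_pos (by omega)]
            rw [hf] at hrx
            exact absurd hrx (by decide)
          have hrs : InSq n r := ⟨hrT.1, by omega, hrT.2.1, hr2⟩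
          exact Or.inl ⟨hrs, hre.tail ⟨hadj, hrs, hrx⟩⟩
      · exact Or.inr hr

lemma cut_blue {n : ℕ} {hn : 0 < n} {c : Fin n × Fin n → Bool} {a e : ℤ × ℤ}
    (h : Reach (GY (2 * n - 1) (extc n hn c) false) a e) (ha : GS n hn c false a) :
    (InSq n e ∧ Reach (GS n hn c false) a e) ∨
      ∃ t, Reach (GS n hn c false) a t ∧ t.2 = (n : ℤ) - 1 := by
  induction h with
  | refl => exact Or.inl ⟨ha.1, .refl⟩
  | tail h1 h2 ih =>
      rename_i q r
      obtain ⟨hadj, hrT, hrx⟩ := h2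
      rcases ih with ⟨hsq, hre⟩ | hr
      · by_cases hN : (n : ℤ) ≤ r.2
        · right
          refine ⟨q, hre, ?_⟩
          have hnear := hexAdj_near hadj
          have hq2 : q.2 < (n : ℤ) := hsq.2.2.2
          omega
        · have hr1 : r.1 < (n : ℤ) := by
            by_contra h'
            have hf : extc n hn c r = true := by
              unfold extc
              rw [if_pos (by omega)]
            rw [hf] at hrx
            exact absurd hrx (by decide)
          have hrs : InSq n r := ⟨hrT.1, hr1, hrT.2.1, by omega⟩
          exact Or.inl ⟨hrs, hre.tail ⟨hadj, hrs, hrx⟩⟩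
      · exact Or.inr hr
lemma reach_list {n : ℕ} {hn : 0 < n} {c : Fin n × Fin n → Bool} {x : Bool} {a b : ℤ × ℤ}
    (h : Reach (GS n hn c x) a b) (ha : GS n hn c x a) :
    ∃ l : List (Fin n × Fin n), l ≠ [] ∧ (∀ t ∈ l, c t = x) ∧
      l.Chain' (fun u v => hexAdj ((u.1 : ℤ), (u.2 : ℤ)) ((v.1 : ℤ), (v.2 : ℤ))) ∧
      l.head? = some (toFin n hn a) ∧ l.getLast? = some (toFin n hn b) := by
  induction h with
  | refl =>
      refine ⟨[toFin n hn a], by simp, ?_, List.isChain_singleton _, rfl, rfl⟩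
      intro t ht
      simp only [List.mem_singleton] at ht
      subst ht
      rw [← extc_sq (c := c) ha.1]
      exact ha.2
  | tail h1 h2 ih =>
      rename_i q r
      obtain ⟨l, hne, hcol, hch, hhd, hlast⟩ := ih
      obtain ⟨hadj, hrs, hrx⟩ := h2
      have hq : GS n hn c x q := reach_good h1 ha
      refine ⟨l ++ [toFin n hn r], by simp, ?_, ?_, ?_, ?_⟩
      · intro t ht
        rcases List.mem_append.mp ht with h' | h'
        · exact hcol t h'
        · simp only [List.mem_singleton] at h'
          subst h'
          rw [← extc_sq (c := c) hrs]
          exact hrx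
      · rw [List.Chain', List.isChain_append]
        refine ⟨hch, List.isChain_singleton _, ?_⟩
        intro u hu v hv
        rw [hlast] at hu
        simp only [Option.mem_def, Option.some.injEq, List.head?_cons] at hu hv
        subst hu
        subst hv
        have e1 := toFin_fst (hn := hn) hq.1.1 hq.1.2.1
        have e2 := toFin_snd (hn := hn) hq.1.2.2.1 hq.1.2.2.2
        have e3 := toFin_fst (hn := hn) hrs.1 hrs.2.1
        have e4 := toFin_snd (hn := hn) hrs.2.2.1 hrs.2.2.2
        rw [e1, e2, e3, e4]
        exact hadj
      · rcases l with _ | ⟨hd, tl⟩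
        · exact absurd rfl hne
        · simpa using hhd
      · simp [List.getLast?_concat]
end HexProof

open HexProof in
/-- Hex Theorem: in any complete 2-colouring of the `n × n` Hex board, at least one
player has a winning chain joining his pair of opposite sides. -/
theorem stmt9 (n : ℕ) (hn : 0 < n) (c : Fin n × Fin n → Bool) :
    WinningChain n c true ∨ WinningChain n c false := by
  obtain ⟨x, p, hp, ⟨a, hra, ha0⟩, ⟨b, hrb, hb0⟩, ⟨e, hre, hesum⟩⟩ :=
    Y_exists (2 * n - 1) (by omega) (extc n hn c)
  have hm2 : ((2 * n - 1 : ℕ) : ℤ) - 1 = 2 * (n : ℤ) - 2 := by omega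
  rw [hm2] at hesum
  cases x with
  | true =>
      left
      have haG : GY (2 * n - 1) (extc n hn c) true a := reach_good hra hp
      have ha2 : a.2 < (n : ℤ) := by
        by_contra h'
        have hf : extc n hn c a = false := by
          unfold extc
          rw [if_neg (by omega), if_pos (by omega)]
        have h2 := haG.2
        rw [hf] at h2
        exact absurd h2 (by decide)
      have haS : GS n hn c true a := ⟨⟨haG.1.1, by omega, haG.1.2.1, ha2⟩, haG.2⟩
      have hae : Reach (GY (2 * n - 1) (extc n hn c) true) a e :=
        (reach_symm hra hp).trans hre
      have ht : ∃ t, Reach (GS n hn c true) a t ∧ t.1 = (n : ℤ) - 1 := by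
        rcases cut_red hae haS with ⟨hsq, hr⟩ | h'
        · exact ⟨e, hr, by obtain ⟨h1, h2, h3, h4⟩ := hsq; omega⟩
        · exact h'
      obtain ⟨t, hat, ht1⟩ := ht
      obtain ⟨l, hne, hcol, hch, hhd, hlast⟩ := reach_list hat haS
      refine ⟨l, hne, hcol, hch, ?_⟩
      rw [if_pos rfl]
      have htS : GS n hn c true t := reach_good hat haS
      constructor
      · refine ⟨toFin n hn a, List.mem_of_mem_head? (by rw [hhd]; rfl), ?_⟩
        have e1 := toFin_fst (hn := hn) haS.1.1 haS.1.2.1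
        omega
      · refine ⟨toFin n hn t, ?_, ?_⟩
        · exact List.mem_of_mem_getLast? hlast
        · have e1 := toFin_fst (hn := hn) htS.1.1 htS.1.2.1
          omega
  | false =>
      right
      have hbG : GY (2 * n - 1) (extc n hn c) false b := reach_good hrb hp
      have hb1 : b.1 < (n : ℤ) := by
        by_contra h'
        have hf : extc n hn c b = true := by
          unfold extc
          rw [if_pos (by omega)]
        have h2 := hbG.2
        rw [hf] at h2
        exact absurd h2 (by decide)
      have hbS : GS n hn c false b := ⟨⟨hbG.1.1, hb1, hbG.1.2.1, by omega⟩, hbG.2⟩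
      have hbe : Reach (GY (2 * n - 1) (extc n hn c) false) b e :=
        (reach_symm hrb hp).trans hre
      have ht : ∃ t, Reach (GS n hn c false) b t ∧ t.2 = (n : ℤ) - 1 := by
        rcases cut_blue hbe hbS with ⟨hsq, hr⟩ | h'
        · exact ⟨e, hr, by obtain ⟨h1, h2, h3, h4⟩ := hsq; omega⟩
        · exact h'
      obtain ⟨t, hbt, ht2⟩ := ht
      obtain ⟨l, hne, hcol, hch, hhd, hlast⟩ := reach_list hbt hbS
      refine ⟨l, hne, hcol, hch, ?_⟩
      rw [if_neg (by decide)]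
      have htS : GS n hn c false t := reach_good hbt hbS
      constructor
      · refine ⟨toFin n hn b, List.mem_of_mem_head? (by rw [hhd]; rfl), ?_⟩
        have e2 := toFin_snd (hn := hn) hbS.1.2.2.1 hbS.1.2.2.2
        omega
      · refine ⟨toFin n hn t, ?_, ?_⟩
        · exact List.mem_of_mem_getLast? hlast
        · have e2 := toFin_snd (hn := hn) htS.1.2.2.1 htS.1.2.2.2
          omega
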